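/- arXiv:1902.01686 — 2 statements merged into one kernel-verified Lean document; each statement's English description precedes it below -/
import Mathlib

section
/- Let y_L be an L-layer neural network with 1-Lipschitz componentwise activation φ, weights W_1,...,W_L, biases b_1,...,b_L. Let x̂ = ξ ⊙ x where ξ_i = 1 - ζ_i with ζ_i i.i.d. Bernoulli(p) (so each input coordinate is zeroed independently with probability p). Then componentwise, E|y_L(x̂) - y_L(x)| ≤ p · |W_L| · |W_{L-1}| · ... · |W_1| · |x|, where |A| denotes the matrix of absolute values and the inequality is entrywise. -/
open MeasureTheory ProbabilityTheory

def nnHidden (n : ℕ → ℕ) (W : ∀ l, Matrix (Fin (n (l + 1))) (Fin (n l)) ℝ)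
    (b : ∀ l, Fin (n (l + 1)) → ℝ) (φ : ℝ → ℝ) :
    (l : ℕ) → (Fin (n 0) → ℝ) → (Fin (n l) → ℝ)
  | 0 => fun x => x
  | l + 1 => fun x i => φ (((W l).mulVec (nnHidden n W b φ l x) + b l) i)

def nnOutput (n : ℕ → ℕ) (W : ∀ l, Matrix (Fin (n (l + 1))) (Fin (n l)) ℝ)
    (b : ∀ l, Fin (n (l + 1)) → ℝ) (φ : ℝ → ℝ) (L : ℕ) (x : Fin (n 0) → ℝ) :
    Fin (n (L + 1)) → ℝ :=
  (W L).mulVec (nnHidden n W b φ L x) + b L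

/-- The vector `|W_l|⋯|W_1||x|`, built up layer by layer from the entrywise
absolute values of the weight matrices and of the input. -/
def absChain (n : ℕ → ℕ) (W : ∀ l, Matrix (Fin (n (l + 1))) (Fin (n l)) ℝ)
    (x : Fin (n 0) → ℝ) : (l : ℕ) → Fin (n l) → ℝ
  | 0 => fun i => |x i|
  | l + 1 => Matrix.mulVec (Matrix.of fun i j => |W l i j|) (absChain n W x l)

def IsBernoulliRV {Ω : Type*} [MeasurableSpace Ω] (μ : Measure Ω) (p : ℝ) (X : Ω → ℝ) : Prop :=
  μ {ω | X ω = 1} = ENNReal.ofReal p ∧ μ {ω | X ω = 0} = ENNReal.ofReal (1 - p)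

/-- The matrix `|W_{l}|⋯|W_1|`. -/
def absMat (n : ℕ → ℕ) (W : ∀ l, Matrix (Fin (n (l + 1))) (Fin (n l)) ℝ) :
    (l : ℕ) → Matrix (Fin (n l)) (Fin (n 0)) ℝ
  | 0 => 1
  | l + 1 => (Matrix.of fun i j => |W l i j|) * absMat n W l

lemma absMat_nonneg (n : ℕ → ℕ) (W : ∀ l, Matrix (Fin (n (l + 1))) (Fin (n l)) ℝ) :
    ∀ l i j, 0 ≤ absMat n W l i j := by
  intro l
  induction l with
  | zero =>
    intro i j
    by_cases h : i = j <;> simp [absMat, Matrix.one_apply, h]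
  | succ l ih =>
    intro i j
    simp only [absMat, Matrix.mul_apply]
    exact Finset.sum_nonneg fun m _ => mul_nonneg (abs_nonneg _) (ih m j)

lemma absChain_eq (n : ℕ → ℕ) (W : ∀ l, Matrix (Fin (n (l + 1))) (Fin (n l)) ℝ)
    (x : Fin (n 0) → ℝ) :
    ∀ l, absChain n W x l = (absMat n W l).mulVec (fun i => |x i|) := by
  intro l
  induction l with
  | zero => simp [absChain, absMat, Matrix.one_mulVec]
  | succ l ih => rw [absChain, ih, absMat, Matrix.mulVec_mulVec]

lemma hidden_bound (n : ℕ → ℕ) (W : ∀ l, Matrix (Fin (n (l + 1))) (Fin (n l)) ℝ)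
    (b : ∀ l, Fin (n (l + 1)) → ℝ) (φ : ℝ → ℝ)
    (hφ : ∀ a b : ℝ, |φ a - φ b| ≤ |a - b|) (u v : Fin (n 0) → ℝ) :
    ∀ l k, |nnHidden n W b φ l u k - nnHidden n W b φ l v k| ≤
      (absMat n W l).mulVec (fun i => |u i - v i|) k := by
  intro l
  induction l with
  | zero => intro k; simp [nnHidden, absMat, Matrix.one_mulVec]
  | succ l ih =>
    intro k
    have h1 : |nnHidden n W b φ (l + 1) u k - nnHidden n W b φ (l + 1) v k| ≤
        |((W l).mulVec (nnHidden n W b φ l u) + b l) k -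
          ((W l).mulVec (nnHidden n W b φ l v) + b l) k| := hφ _ _
    have h2 : ((W l).mulVec (nnHidden n W b φ l u) + b l) k -
        ((W l).mulVec (nnHidden n W b φ l v) + b l) k =
        ∑ j, W l k j * (nnHidden n W b φ l u j - nnHidden n W b φ l v j) := by
      simp [Matrix.mulVec, dotProduct, mul_sub, Finset.sum_sub_distrib]
    rw [h2] at h1
    refine h1.trans ?_
    refine (Finset.abs_sum_le_sum_abs _ _).trans ?_
    have h3 : (absMat n W (l + 1)).mulVec (fun i => |u i - v i|) k =
        ∑ j, |W l k j| * ((absMat n W l).mulVec (fun i => |u i - v i|) j) := by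
      rw [absMat, ← Matrix.mulVec_mulVec]
      simp [Matrix.mulVec, dotProduct]
    rw [h3]
    refine Finset.sum_le_sum fun j _ => ?_
    rw [abs_mul]
    exact mul_le_mul_of_nonneg_left (ih j) (abs_nonneg _)

lemma output_bound (n : ℕ → ℕ) (W : ∀ l, Matrix (Fin (n (l + 1))) (Fin (n l)) ℝ)
    (b : ∀ l, Fin (n (l + 1)) → ℝ) (φ : ℝ → ℝ)
    (hφ : ∀ a b : ℝ, |φ a - φ b| ≤ |a - b|) (u v : Fin (n 0) → ℝ) (L : ℕ) (k : Fin (n (L + 1))) :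
    |nnOutput n W b φ L u k - nnOutput n W b φ L v k| ≤
      (absMat n W (L + 1)).mulVec (fun i => |u i - v i|) k := by
  have h2 : nnOutput n W b φ L u k - nnOutput n W b φ L v k =
      ∑ j, W L k j * (nnHidden n W b φ L u j - nnHidden n W b φ L v j) := by
    simp [nnOutput, Matrix.mulVec, dotProduct, mul_sub, Finset.sum_sub_distrib]
  rw [h2]
  refine (Finset.abs_sum_le_sum_abs _ _).trans ?_
  have h3 : (absMat n W (L + 1)).mulVec (fun i => |u i - v i|) k =
      ∑ j, |W L k j| * ((absMat n W L).mulVec (fun i => |u i - v i|) j) := by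
    rw [absMat, ← Matrix.mulVec_mulVec]
    simp [Matrix.mulVec, dotProduct]
  rw [h3]
  refine Finset.sum_le_sum fun j _ => ?_
  rw [abs_mul]
  exact mul_le_mul_of_nonneg_left (hidden_bound n W b φ hφ u v L j) (abs_nonneg _)

lemma bern_abs {Ω : Type*} [MeasurableSpace Ω] (μ : Measure Ω) [IsProbabilityMeasure μ]
    {p : ℝ} (hp0 : 0 ≤ p) {X : Ω → ℝ} (hX : Measurable X)
    (hB : IsBernoulliRV μ p X) :
    Integrable (fun ω => |X ω|) μ ∧ (∫ ω, |X ω| ∂μ) = p := by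
  have hA : MeasurableSet {ω | X ω = 1} := hX (measurableSet_singleton 1)
  have hBs : MeasurableSet {ω | X ω = 0} := hX (measurableSet_singleton 0)
  have hdisj : Disjoint {ω | X ω = 1} {ω | X ω = 0} := by
    rw [Set.disjoint_left]; intro ω h1 h0
    simp only [Set.mem_setOf_eq] at h1 h0
    rw [h1] at h0; norm_num at h0
  have hp1' : 0 ≤ 1 - p := by
    by_contra h
    push_neg at h
    have : (ENNReal.ofReal (1 - p) : ENNReal) = 0 := ENNReal.ofReal_eq_zero.mpr (le_of_lt h)
    have hle := measure_mono (μ := μ) (Set.subset_univ {ω | X ω = 1})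
    rw [hB.1, measure_univ] at hle
    have : p ≤ 1 := by
      by_contra hp
      push_neg at hp
      have := ENNReal.one_lt_ofReal.mpr hp
      exact absurd hle (not_le.mpr this)
    linarith
  have hunion : μ ({ω | X ω = 1} ∪ {ω | X ω = 0}) = 1 := by
    rw [measure_union hdisj hBs, hB.1, hB.2, ← ENNReal.ofReal_add hp0 hp1']
    norm_num
  have hcompl : μ ({ω | X ω = 1} ∪ {ω | X ω = 0})ᶜ = 0 := by
    rw [measure_compl (hA.union hBs) (measure_ne_top _ _), hunion, measure_univ, tsub_self]
  have hae : ∀ᵐ ω ∂μ, X ω = 1 ∨ X ω = 0 := by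
    have hset : {ω | ¬(X ω = 1 ∨ X ω = 0)} = ({ω | X ω = 1} ∪ {ω | X ω = 0})ᶜ := by
      ext ω; simp [not_or]
    rw [ae_iff, hset]
    exact hcompl
  have heq : (fun ω => |X ω|) =ᵐ[μ] Set.indicator {ω | X ω = 1} (fun _ => (1:ℝ)) := by
    filter_upwards [hae] with ω hω
    rcases hω with h | h
    · have hm : ω ∈ {ω | X ω = 1} := h
      simp [Set.indicator_of_mem hm, h]
    · have hm : ω ∉ {ω | X ω = 1} := by simp [Set.mem_setOf_eq, h]
      simp [Set.indicator_of_notMem hm, h]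
  have hint : Integrable (Set.indicator {ω | X ω = 1} (fun _ => (1:ℝ))) μ :=
    (integrable_const (1:ℝ)).indicator hA
  refine ⟨hint.congr heq.symm, ?_⟩
  rw [integral_congr_ae heq, integral_indicator_const (1:ℝ) hA, measureReal_def, hB.1, smul_eq_mul, mul_one,
    ENNReal.toReal_ofReal hp0]

/-- Absolute value bound (bound b2): for independent Bernoulli(p) input crashes,
entrywise `E|y_L(ξ⊙x) - y_L(x)| ≤ p·(|W_L|⋯|W_1||x|)`. -/
theorem stmt_3 {Ω : Type*} [MeasurableSpace Ω] (μ : Measure Ω) [IsProbabilityMeasure μ]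
    (n : ℕ → ℕ) (L : ℕ)
    (W : ∀ l, Matrix (Fin (n (l + 1))) (Fin (n l)) ℝ)
    (b : ∀ l, Fin (n (l + 1)) → ℝ) (φ : ℝ → ℝ)
    (hφ : ∀ a b : ℝ, |φ a - φ b| ≤ |a - b|)
    (p : ℝ) (hp0 : 0 ≤ p) (hp1 : p ≤ 1)
    (ζ : Fin (n 0) → Ω → ℝ) (hmeas : ∀ i, Measurable (ζ i))
    (hBern : ∀ i, IsBernoulliRV μ p (ζ i))
    (hindep : iIndepFun ζ μ)
    (x : Fin (n 0) → ℝ)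
    (xh : Ω → Fin (n 0) → ℝ) (hxh : ∀ ω i, xh ω i = (1 - ζ i ω) * x i) :
    ∀ k, (∫ ω, |nnOutput n W b φ L (xh ω) k - nnOutput n W b φ L x k| ∂μ) ≤
      p * absChain n W x (L + 1) k := by
  intro k
  set M := absMat n W (L + 1) with hM
  -- the dominating function
  set g : Ω → ℝ := fun ω => ∑ i, M k i * (|ζ i ω| * |x i|) with hg
  have hdiff : ∀ ω i, |xh ω i - x i| = |ζ i ω| * |x i| := by
    intro ω i
    rw [hxh, show (1 - ζ i ω) * x i - x i = -(ζ i ω * x i) by ring, abs_neg, abs_mul]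
  have hpoint : ∀ ω, |nnOutput n W b φ L (xh ω) k - nnOutput n W b φ L x k| ≤ g ω := by
    intro ω
    refine (output_bound n W b φ hφ (xh ω) x L k).trans_eq ?_
    simp only [Matrix.mulVec, dotProduct, hg]
    refine Finset.sum_congr rfl fun i _ => ?_
    rw [hdiff]
  have hζint : ∀ i : Fin (n 0), Integrable (fun ω => |ζ i ω|) μ ∧ (∫ ω, |ζ i ω| ∂μ) = p :=
    fun i => bern_abs μ hp0 (hmeas i) (hBern i)
  have hgint : Integrable g μ := by
    refine integrable_finset_sum _ fun i _ => ?_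
    have : (fun ω => M k i * (|ζ i ω| * |x i|)) = fun ω => (M k i * |x i|) * |ζ i ω| := by
      funext ω; ring
    rw [this]
    exact (hζint i).1.const_mul _
  have hle : (∫ ω, |nnOutput n W b φ L (xh ω) k - nnOutput n W b φ L x k| ∂μ) ≤ ∫ ω, g ω ∂μ := by
    refine integral_mono_of_nonneg ?_ hgint ?_
    · filter_upwards with ω using abs_nonneg _
    · filter_upwards with ω using hpoint ω
  have hgval : (∫ ω, g ω ∂μ) = p * absChain n W x (L + 1) k := by
    rw [hg, integral_finset_sum]
    · rw [absChain_eq]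
      simp only [Matrix.mulVec, dotProduct, ← hM]
      rw [Finset.mul_sum]
      refine Finset.sum_congr rfl fun i _ => ?_
      have : (fun ω => M k i * (|ζ i ω| * |x i|)) = fun ω => (M k i * |x i|) * |ζ i ω| := by
        funext ω; ring
      rw [this, integral_const_mul, (hζint i).2]
      ring
    · intro i _
      have : (fun ω => M k i * (|ζ i ω| * |x i|)) = fun ω => (M k i * |x i|) * |ζ i ω| := by
        funext ω; ring
      rw [this]
      exact (hζint i).1.const_mul _
  rw [← hgval]
  exact hle
end

section
/- Let W: [0,1]² → ℝ be continuous with ∫∫|W(t,t')|dt dt' > 0 and suppose ∫ (∫|W(t,t')|dt)² dt' > 0. For each n, define W^i = Σ_{j=1}^n |W((i-1)/(n-1), (j-1)/(n-1))|/n. Then (Σ_{i=1}^n W^i)² / (n·Σ_{i=1}^n (W^i)²) → (∫∫|W(t,t')|dt dt')² / ∫(∫|W(t,t')|dt')² dt as n → ∞. -/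
open MeasureTheory Filter

lemma icc_eq_interval (h : ℝ → ℝ) :
    (∫ t in Set.Icc (0:ℝ) 1, h t) = ∫ t in (0:ℝ)..1, h t := by
  rw [intervalIntegral.integral_of_le zero_le_one, integral_Icc_eq_integral_Ioc]

lemma node_mem {n i : ℕ} (hn : 2 ≤ n) (hi : i < n) :
    (i:ℝ) / ((n:ℝ) - 1) ∈ Set.Icc (0:ℝ) 1 := by
  have hn2 : (2:ℝ) ≤ (n:ℝ) := by exact_mod_cast hn
  have hn1 : (0:ℝ) < (n:ℝ) - 1 := by linarith
  have hi' : (i:ℝ) ≤ (n:ℝ) - 1 := by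
    have : (i:ℝ) + 1 ≤ (n:ℝ) := by exact_mod_cast hi
    linarith
  exact ⟨by positivity, (div_le_one hn1).2 hi'⟩

lemma riemann_quant (h : ℝ → ℝ) (hc : ContinuousOn h (Set.Icc 0 1))
    (n : ℕ) (hn : 2 ≤ n) (ε δ : ℝ)
    (hmod : ∀ x ∈ Set.Icc (0:ℝ) 1, ∀ y ∈ Set.Icc (0:ℝ) 1, |x - y| ≤ δ → |h x - h y| ≤ ε)
    (hnd : 1 / (n:ℝ) ≤ δ) :
    |(∑ i ∈ Finset.range n, h ((i:ℝ) / ((n:ℝ) - 1))) / n - ∫ t in Set.Icc (0:ℝ) 1, h t| ≤ ε := by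
  have hn2 : (2:ℝ) ≤ (n:ℝ) := by exact_mod_cast hn
  have hn0 : (0:ℝ) < (n:ℝ) := by linarith
  have hn1 : (0:ℝ) < (n:ℝ) - 1 := by linarith
  set a : ℕ → ℝ := fun i => (i:ℝ) / n with ha
  have hle : ∀ i : ℕ, a i ≤ a (i+1) := by
    intro i
    simp only [ha]
    gcongr
    · push_cast; linarith
  have hmem : ∀ i : ℕ, i < n → Set.Icc (a i) (a (i+1)) ⊆ Set.Icc (0:ℝ) 1 := by
    intro i hi
    apply Set.Icc_subset_Icc
    · positivity
    · rw [div_le_one hn0]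
      push_cast
      have : (i:ℝ) + 1 ≤ (n:ℝ) := by exact_mod_cast hi
      linarith
  have hint : ∀ i < n, IntervalIntegrable h volume (a i) (a (i+1)) := by
    intro i hi
    apply ContinuousOn.intervalIntegrable
    rw [Set.uIcc_of_le (hle i)]
    exact hc.mono (hmem i hi)
  have h01 : (∫ t in (0:ℝ)..1, h t) = ∑ i ∈ Finset.range n, ∫ t in a i..a (i+1), h t := by
    rw [intervalIntegral.sum_integral_adjacent_intervals hint]
    norm_num [ha, div_self hn0.ne']
  -- node x_i lies in [a i, a (i+1)]
  have hnode : ∀ i : ℕ, i < n → (i:ℝ) / ((n:ℝ) - 1) ∈ Set.Icc (a i) (a (i+1)) := by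
    intro i hi
    have hi' : (i:ℝ) + 1 ≤ (n:ℝ) := by exact_mod_cast hi
    constructor
    · rw [ha, div_le_div_iff₀ hn0 hn1]
      nlinarith [Nat.cast_nonneg (α := ℝ) i]
    · rw [ha, div_le_div_iff₀ hn1 hn0]
      push_cast
      nlinarith [Nat.cast_nonneg (α := ℝ) i]
  have key : ∀ i ∈ Finset.range n,
      |h ((i:ℝ) / ((n:ℝ) - 1)) / n - ∫ t in a i..a (i+1), h t| ≤ ε / n := by
    intro i hi
    rw [Finset.mem_range] at hi
    set x := (i:ℝ) / ((n:ℝ) - 1) with hx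
    have hxm := hnode i hi
    have hx01 : x ∈ Set.Icc (0:ℝ) 1 := hmem i hi hxm
    have hgap : a (i+1) - a i = 1 / n := by
      rw [ha]; push_cast; field_simp; ring
    have hconst : h x / n = ∫ _ in a i..a (i+1), h x := by
      have e1 : (∫ _ in a i..a (i+1), h x) = (a (i+1) - a i) * h x := by
        rw [intervalIntegral.integral_const, smul_eq_mul]
      rw [e1, hgap]; ring
    rw [hconst, ← intervalIntegral.integral_sub (intervalIntegrable_const) (hint i hi)]
    have hb : ∀ t ∈ Set.uIoc (a i) (a (i+1)), ‖h x - h t‖ ≤ ε := by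
      intro t ht
      rw [Set.uIoc_of_le (hle i)] at ht
      have ht' : t ∈ Set.Icc (a i) (a (i+1)) := ⟨le_of_lt ht.1, ht.2⟩
      have ht01 : t ∈ Set.Icc (0:ℝ) 1 := hmem i hi ht'
      rw [Real.norm_eq_abs]
      apply hmod x hx01 t ht01
      have : |x - t| ≤ a (i+1) - a i :=
        abs_sub_le_iff.2 ⟨by linarith [hxm.1, hxm.2, ht'.1, ht'.2],
          by linarith [hxm.1, hxm.2, ht'.1, ht'.2]⟩
      rw [hgap] at this
      exact le_trans this hnd
    have := intervalIntegral.norm_integral_le_of_norm_le_const hb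
    rw [Real.norm_eq_abs] at this
    calc |∫ t in a i..a (i+1), (h x - h t)| ≤ ε * |a (i+1) - a i| := this
      _ = ε / n := by rw [hgap, abs_of_pos (by positivity)]; ring
  rw [icc_eq_interval, h01, Finset.sum_div, ← Finset.sum_sub_distrib]
  calc |∑ i ∈ Finset.range n, (h ((i:ℝ) / ((n:ℝ) - 1)) / n - ∫ t in a i..a (i+1), h t)|
      ≤ ∑ i ∈ Finset.range n, |h ((i:ℝ) / ((n:ℝ) - 1)) / n - ∫ t in a i..a (i+1), h t| :=
        Finset.abs_sum_le_sum_abs _ _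
    _ ≤ ∑ _i ∈ Finset.range n, ε / n := Finset.sum_le_sum key
    _ = ε := by rw [Finset.sum_const, Finset.card_range, nsmul_eq_mul]; field_simp
lemma riemann_tendsto (h : ℝ → ℝ) (hc : ContinuousOn h (Set.Icc 0 1)) :
    Tendsto (fun n : ℕ => (∑ i ∈ Finset.range n, h ((i:ℝ) / ((n:ℝ) - 1))) / n) atTop
      (nhds (∫ t in Set.Icc (0:ℝ) 1, h t)) := by
  rw [Metric.tendsto_atTop]
  intro ε hε
  obtain ⟨δ, hδ, H⟩ := Metric.uniformContinuousOn_iff.1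
    (isCompact_Icc.uniformContinuousOn_of_continuous hc) (ε/2) (by linarith)
  obtain ⟨N, hN⟩ := exists_nat_ge (2/δ)
  refine ⟨max N 2, fun n hn => ?_⟩
  have h2 : 2 ≤ n := le_trans (le_max_right _ _) hn
  have hn0 : (0:ℝ) < n := by
    have : (2:ℝ) ≤ (n:ℝ) := by exact_mod_cast h2
    linarith
  have hNn : (2:ℝ)/δ ≤ (n:ℝ) := by
    calc (2:ℝ)/δ ≤ N := hN
      _ ≤ n := by exact_mod_cast le_trans (le_max_left _ _) hn
  have hd : 1/(n:ℝ) ≤ δ/2 := by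
    rw [div_le_div_iff₀ hn0 two_pos]
    rw [div_le_iff₀ hδ] at hNn
    linarith
  have hmod : ∀ x ∈ Set.Icc (0:ℝ) 1, ∀ y ∈ Set.Icc (0:ℝ) 1, |x - y| ≤ δ/2 → |h x - h y| ≤ ε/2 := by
    intro x hx y hy hxy
    have : dist x y < δ := by rw [Real.dist_eq]; linarith
    have := H x hx y hy this
    rw [Real.dist_eq] at this
    linarith
  have := riemann_quant h hc n h2 (ε/2) (δ/2) hmod hd
  rw [Real.dist_eq]
  linarith
/-- Discretized row sums of a continuous weight function. -/
noncomputable def rowSum (W : ℝ → ℝ → ℝ) (n : ℕ) (i : ℕ) : ℝ :=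
  (∑ j ∈ Finset.range n, |W ((i : ℝ) / ((n : ℝ) - 1)) ((j : ℝ) / ((n : ℝ) - 1))|) / n

/-- The continuous limit implies q-balancedness: the balance ratio of the
discretized row sums converges to `(∫∫|W|)² / ∫(∫|W(t,t')|dt')²dt`. -/
theorem stmt_17 (W : ℝ → ℝ → ℝ)
    (hW : ContinuousOn (Function.uncurry W) (Set.Icc (0 : ℝ) 1 ×ˢ Set.Icc (0 : ℝ) 1))
    (hpos1 : 0 < ∫ t in Set.Icc (0 : ℝ) 1, ∫ t' in Set.Icc (0 : ℝ) 1, |W t t'|)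
    (hpos2 : 0 < ∫ t in Set.Icc (0 : ℝ) 1, (∫ t' in Set.Icc (0 : ℝ) 1, |W t t'|) ^ 2) :
    Tendsto
      (fun n : ℕ =>
        (∑ i ∈ Finset.range n, rowSum W n i) ^ 2 /
          ((n : ℝ) * ∑ i ∈ Finset.range n, (rowSum W n i) ^ 2))
      atTop
      (nhds ((∫ t in Set.Icc (0 : ℝ) 1, ∫ t' in Set.Icc (0 : ℝ) 1, |W t t'|) ^ 2 /
        ∫ t in Set.Icc (0 : ℝ) 1, (∫ t' in Set.Icc (0 : ℝ) 1, |W t t'|) ^ 2)) := by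
  set K := Set.Icc (0:ℝ) 1 ×ˢ Set.Icc (0:ℝ) 1 with hKdef
  have hK : IsCompact K := isCompact_Icc.prod isCompact_Icc
  have hfc : ContinuousOn (fun p : ℝ × ℝ => |W p.1 p.2|) K := hW.abs
  have hfu := hK.uniformContinuousOn_of_continuous hfc
  obtain ⟨C, hC⟩ := hK.exists_bound_of_continuousOn hfc
  set D := |C| with hD
  have hCD : ∀ x ∈ Set.Icc (0:ℝ) 1, ∀ y ∈ Set.Icc (0:ℝ) 1, |W x y| ≤ D := by
    intro x hx y hy
    have := hC (x, y) ⟨hx, hy⟩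
    rw [Real.norm_eq_abs, abs_abs] at this
    exact le_trans this (le_abs_self C)
  have hD0 : 0 ≤ D := abs_nonneg C
  -- continuity of sections
  have hWx : ∀ x ∈ Set.Icc (0:ℝ) 1, ContinuousOn (fun t' => |W x t'|) (Set.Icc (0:ℝ) 1) := by
    intro x hx
    have h1 : ContinuousOn (fun t' : ℝ => (x, t')) (Set.Icc (0:ℝ) 1) :=
      (Continuous.prodMk_right x).continuousOn
    exact (hW.comp h1 fun t' ht' => Set.mk_mem_prod hx ht').abs
  set g : ℝ → ℝ := fun t => ∫ t' in Set.Icc (0:ℝ) 1, |W t t'| with hg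
  have hgnn : ∀ t, 0 ≤ g t := fun t => integral_nonneg fun t' => abs_nonneg _
  have hgb : ∀ x ∈ Set.Icc (0:ℝ) 1, g x ≤ D := by
    intro x hx
    have hmeas : AEStronglyMeasurable (fun t' => |W x t'|)
        (volume.restrict (Set.Icc (0:ℝ) 1)) :=
      ((hWx x hx)).aestronglyMeasurable measurableSet_Icc
    have := norm_setIntegral_le_of_norm_le_const (C := D)
      (measure_Icc_lt_top (μ := volume) (a := (0:ℝ)) (b := 1))
      (f := fun t' => |W x t'|) (fun t' ht' => by
        rw [Real.norm_eq_abs, abs_abs]; exact hCD x hx t' ht')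
    have hvol : volume.real (Set.Icc (0:ℝ) 1) = 1 := by
      rw [Real.volume_real_Icc]; norm_num
    rw [hvol, mul_one, Real.norm_eq_abs] at this
    exact le_trans (le_abs_self _) this
  -- continuity of g
  have hgc : ContinuousOn g (Set.Icc (0:ℝ) 1) := by
    apply continuousOn_of_dominated (bound := fun _ => D)
    · intro x hx
      exact (hWx x hx).aestronglyMeasurable measurableSet_Icc
    · intro x hx
      filter_upwards [ae_restrict_mem measurableSet_Icc] with t' ht'
      rw [Real.norm_eq_abs, abs_abs]
      exact hCD x hx t' ht'
    · exact integrableOn_const measure_Icc_lt_top.ne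
    · filter_upwards [ae_restrict_mem measurableSet_Icc] with t' ht'
      have h1 : ContinuousOn (fun x : ℝ => (x, t')) (Set.Icc (0:ℝ) 1) :=
        (Continuous.prodMk_left t').continuousOn
      exact (hW.comp h1 fun x hx => Set.mk_mem_prod hx ht').abs
  -- key uniform approximation
  have key : ∀ ε > 0, ∀ᶠ n : ℕ in atTop, ∀ i < n,
      |rowSum W n i - g ((i:ℝ)/((n:ℝ)-1))| ≤ ε := by
    intro ε hε
    obtain ⟨δ, hδ, H⟩ := Metric.uniformContinuousOn_iff.1 hfu ε hε
    obtain ⟨N, hN⟩ := exists_nat_ge (2/δ)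
    filter_upwards [eventually_ge_atTop (max N 2)] with n hn i hi
    have h2 : 2 ≤ n := le_trans (le_max_right _ _) hn
    have hn0 : (0:ℝ) < n := by
      have : (2:ℝ) ≤ (n:ℝ) := by exact_mod_cast h2
      linarith
    have hNn : (2:ℝ)/δ ≤ (n:ℝ) := by
      calc (2:ℝ)/δ ≤ N := hN
        _ ≤ n := by exact_mod_cast le_trans (le_max_left _ _) hn
    have hd : 1/(n:ℝ) ≤ δ/2 := by
      rw [div_le_div_iff₀ hn0 two_pos]
      rw [div_le_iff₀ hδ] at hNn
      linarith
    have hx01 : (i:ℝ)/((n:ℝ)-1) ∈ Set.Icc (0:ℝ) 1 := node_mem h2 hi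
    have hmod : ∀ x ∈ Set.Icc (0:ℝ) 1, ∀ y ∈ Set.Icc (0:ℝ) 1, |x - y| ≤ δ/2 →
        |(fun t' => |W ((i:ℝ)/((n:ℝ)-1)) t'|) x - (fun t' => |W ((i:ℝ)/((n:ℝ)-1)) t'|) y| ≤ ε := by
      intro x hx y hy hxy
      have hdist : dist ((i:ℝ)/((n:ℝ)-1), x) ((i:ℝ)/((n:ℝ)-1), y) < δ := by
        rw [Prod.dist_eq]
        simp only [dist_self, Real.dist_eq]
        rw [max_lt_iff]
        constructor <;> [exact hδ; linarith]
      have := H _ (Set.mk_mem_prod hx01 hx) _ (Set.mk_mem_prod hx01 hy) hdist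
      rw [Real.dist_eq] at this
      exact le_of_lt this
    have := riemann_quant (fun t' => |W ((i:ℝ)/((n:ℝ)-1)) t'|) (hWx _ hx01) n h2 ε (δ/2) hmod hd
    simpa [rowSum, hg] using this
  -- bound on rowSum
  have rowB : ∀ n i : ℕ, 2 ≤ n → i < n → rowSum W n i ∈ Set.Icc (0:ℝ) D := by
    intro n i h2 hi
    have hn0 : (0:ℝ) < n := by
      have : (2:ℝ) ≤ (n:ℝ) := by exact_mod_cast h2
      linarith
    constructor
    · apply div_nonneg _ hn0.le
      exact Finset.sum_nonneg fun j _ => abs_nonneg _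
    · rw [rowSum, div_le_iff₀ hn0]
      calc ∑ j ∈ Finset.range n, |W ((i:ℝ)/((n:ℝ)-1)) ((j:ℝ)/((n:ℝ)-1))|
          ≤ ∑ _j ∈ Finset.range n, D := Finset.sum_le_sum fun j hj =>
            hCD _ (node_mem h2 hi) _ (node_mem h2 (Finset.mem_range.1 hj))
        _ = D * n := by rw [Finset.sum_const, Finset.card_range, nsmul_eq_mul]; ring
  -- L1
  have L1 : Tendsto (fun n : ℕ => (∑ i ∈ Finset.range n, rowSum W n i) / n) atTop
      (nhds (∫ t in Set.Icc (0:ℝ) 1, g t)) := by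
    have hA := riemann_tendsto g hgc
    have hdiff : Tendsto (fun n : ℕ => (∑ i ∈ Finset.range n, rowSum W n i) / n
        - (∑ i ∈ Finset.range n, g ((i:ℝ)/((n:ℝ)-1))) / n) atTop (nhds 0) := by
      rw [NormedAddCommGroup.tendsto_nhds_zero]
      intro ε hε
      filter_upwards [key (ε/2) (by linarith), eventually_ge_atTop 1] with n hn hn1
      have hn0 : (0:ℝ) < n := by exact_mod_cast hn1
      rw [div_sub_div_same, ← Finset.sum_sub_distrib, Real.norm_eq_abs, abs_div,
        abs_of_pos hn0]
      rw [div_lt_iff₀ hn0]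
      calc |∑ i ∈ Finset.range n, (rowSum W n i - g ((i:ℝ)/((n:ℝ)-1)))|
          ≤ ∑ i ∈ Finset.range n, |rowSum W n i - g ((i:ℝ)/((n:ℝ)-1))| :=
            Finset.abs_sum_le_sum_abs _ _
        _ ≤ ∑ _i ∈ Finset.range n, ε/2 := Finset.sum_le_sum fun i hi =>
            hn i (Finset.mem_range.1 hi)
        _ = ε/2 * n := by rw [Finset.sum_const, Finset.card_range, nsmul_eq_mul]; ring
        _ < ε * n := by nlinarith
    have := hdiff.add hA
    rw [zero_add] at this
    refine this.congr fun n => ?_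
    ring
  -- L2
  have L2 : Tendsto (fun n : ℕ => (∑ i ∈ Finset.range n, (rowSum W n i)^2) / n) atTop
      (nhds (∫ t in Set.Icc (0:ℝ) 1, (g t)^2)) := by
    have hA := riemann_tendsto (fun t => (g t)^2) (hgc.pow 2)
    have hdiff : Tendsto (fun n : ℕ => (∑ i ∈ Finset.range n, (rowSum W n i)^2) / n
        - (∑ i ∈ Finset.range n, (g ((i:ℝ)/((n:ℝ)-1)))^2) / n) atTop (nhds 0) := by
      rw [NormedAddCommGroup.tendsto_nhds_zero]
      intro ε hε
      have hε' : 0 < ε / (2 * (2*D+1)) := by positivity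
      filter_upwards [key _ hε', eventually_ge_atTop 2] with n hn hn2
      have hn0 : (0:ℝ) < n := by
        have : (2:ℝ) ≤ (n:ℝ) := by exact_mod_cast hn2
        linarith
      have hterm : ∀ i < n, |(rowSum W n i)^2 - (g ((i:ℝ)/((n:ℝ)-1)))^2| ≤ ε/2 := by
        intro i hi
        obtain ⟨hr0, hrD⟩ := rowB n i hn2 hi
        have hx01 := node_mem hn2 hi
        have hgD := hgb _ hx01
        have hg0 := hgnn ((i:ℝ)/((n:ℝ)-1))
        have hdiff := hn i hi
        have : (rowSum W n i)^2 - (g ((i:ℝ)/((n:ℝ)-1)))^2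
            = (rowSum W n i - g ((i:ℝ)/((n:ℝ)-1))) * (rowSum W n i + g ((i:ℝ)/((n:ℝ)-1))) := by
          ring
        rw [this, abs_mul]
        have habs : |rowSum W n i + g ((i:ℝ)/((n:ℝ)-1))| ≤ 2*D+1 := by
          rw [abs_of_nonneg (by linarith)]
          linarith
        calc |rowSum W n i - g ((i:ℝ)/((n:ℝ)-1))| * |rowSum W n i + g ((i:ℝ)/((n:ℝ)-1))|
            ≤ (ε / (2 * (2*D+1))) * (2*D+1) := by
              apply mul_le_mul hdiff habs (abs_nonneg _) hε'.le
          _ = ε/2 := by field_simp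
        
      rw [div_sub_div_same, ← Finset.sum_sub_distrib, Real.norm_eq_abs, abs_div,
        abs_of_pos hn0, div_lt_iff₀ hn0]
      calc |∑ i ∈ Finset.range n, ((rowSum W n i)^2 - (g ((i:ℝ)/((n:ℝ)-1)))^2)|
          ≤ ∑ i ∈ Finset.range n, |(rowSum W n i)^2 - (g ((i:ℝ)/((n:ℝ)-1)))^2| :=
            Finset.abs_sum_le_sum_abs _ _
        _ ≤ ∑ _i ∈ Finset.range n, ε/2 := Finset.sum_le_sum fun i hi =>
            hterm i (Finset.mem_range.1 hi)
        _ = ε/2 * n := by rw [Finset.sum_const, Finset.card_range, nsmul_eq_mul]; ring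
        _ < ε * n := by nlinarith
    have := hdiff.add hA
    rw [zero_add] at this
    refine this.congr fun n => ?_
    ring
  -- final assembly
  have hne : (∫ t in Set.Icc (0:ℝ) 1, (g t)^2) ≠ 0 := ne_of_gt hpos2
  have hlim := (L1.pow 2).div L2 hne
  refine Tendsto.congr' ?_ hlim
  filter_upwards [eventually_ge_atTop 1] with n hn1
  have hn0 : (n:ℝ) ≠ 0 := by
    have : (0:ℝ) < n := by exact_mod_cast hn1
    linarith
  rcases eq_or_ne (∑ i ∈ Finset.range n, (rowSum W n i)^2) 0 with hT | hT
  · simp [hT]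
  · rw [Pi.div_apply]
    field_simp
end
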